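/- Let N ≥ 2 be an integer. For x ∈ ℝ^N write x₊ for the vector of components max(x_i, 0) and x₋ for the vector of components min(x_i, 0), and ‖·‖ for the Euclidean norm. For an integer m ≥ 1 set S_m = π^{m/2} / (2^{m−1} Γ(m/2)). Then for every measurable function F: [0,∞) × [0,∞) → [0,∞), ∫_{ℝ^N} F(‖x₊‖, ‖x₋‖) dx = S_N ∫_0^∞ r^{N−1} F(r, 0) dr + S_N ∫_0^∞ r^{N−1} F(0, r) dr + Σ_{k=1}^{N−1} (N choose k) S_{N−k} S_k ∫_0^∞ ∫_0^∞ r₊^{N−k−1} r₋^{k−1} F(r₊, r₋) dr₋ dr₊, where k indexes orthants with k strictly negative components, (N choose k) is the binomial coefficient, and the integrals are Lebesgue integrals of nonnegative functions. -/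

import Mathlib

open MeasureTheory
open scoped ENNReal
open Set
set_option linter.unusedSectionVars false
set_option linter.unusedVariables false
open MeasureTheory Set
open scoped ENNReal

local notation "dim" => Module.finrank ℝ

lemma lintegral_fun_norm_addHaar' {E : Type*} [NormedAddCommGroup E] [NormedSpace ℝ E]
    [MeasurableSpace E] [BorelSpace E] [Nontrivial E] (μ : Measure E)
    [FiniteDimensional ℝ E] [μ.IsAddHaarMeasure]
    (g : ℝ → ℝ≥0∞) (hg : Measurable g) :
    ∫⁻ x, g ‖x‖ ∂μ =
      (dim E : ℝ≥0∞) * μ (Metric.ball 0 1) *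
        ∫⁻ r in Ioi (0 : ℝ), ENNReal.ofReal (r ^ (dim E - 1)) * g r := by
  have h1 : ∫⁻ x, g ‖x‖ ∂μ = ∫⁻ x : ({(0)}ᶜ : Set E), g ‖(x : E)‖ ∂(μ.comap (↑)) := by
    rw [lintegral_subtype_comap (measurableSet_singleton (0:E)).compl (fun y => g ‖y‖),
      MeasureTheory.restrict_compl_singleton]
  have h2 : ∫⁻ x : ({(0)}ᶜ : Set E), g ‖(x : E)‖ ∂(μ.comap (↑)) =
      ∫⁻ p : Metric.sphere (0 : E) 1 × Ioi (0 : ℝ), ((g ∘ Subtype.val) ∘ Prod.snd) p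
        ∂μ.toSphere.prod (.volumeIoiPow (dim E - 1)) := by
    rw [← μ.measurePreserving_homeomorphUnitSphereProd.lintegral_comp
      ((hg.comp measurable_subtype_coe).comp measurable_snd)]
    simp only [Function.comp_apply, homeomorphUnitSphereProd_apply_snd_coe]
  have h3 : ∫⁻ p : Metric.sphere (0 : E) 1 × Ioi (0 : ℝ), ((g ∘ Subtype.val) ∘ Prod.snd) p
        ∂μ.toSphere.prod (.volumeIoiPow (dim E - 1)) =
      μ.toSphere univ * ∫⁻ r : Ioi (0 : ℝ), g r ∂(Measure.volumeIoiPow (dim E - 1)) := by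
    rw [lintegral_prod _ (((hg.comp measurable_subtype_coe).comp measurable_snd).aemeasurable)]
    simp only [Function.comp_apply]
    rw [lintegral_const, mul_comm]
  have h4 : ∫⁻ r : Ioi (0 : ℝ), g r ∂(Measure.volumeIoiPow (dim E - 1)) =
      ∫⁻ r in Ioi (0 : ℝ), ENNReal.ofReal (r ^ (dim E - 1)) * g r := by
    rw [Measure.volumeIoiPow]
    rw [show (fun r : Ioi (0:ℝ) => g r) = fun r : Ioi (0:ℝ) => (g ∘ Subtype.val) r from rfl,
      lintegral_withDensity_eq_lintegral_mul _
        ((measurable_subtype_coe.pow_const _).ennreal_ofReal)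
        (hg.comp measurable_subtype_coe),
      ← lintegral_subtype_comap measurableSet_Ioi
        (fun a : ℝ => ENNReal.ofReal (a ^ (dim E - 1)) * g a)]
    rfl
  rw [h1, h2, h3, h4, Measure.toSphere_apply_univ]

noncomputable def Sval (m : ℕ) : ℝ≥0∞ :=
  ENNReal.ofReal (Real.pi ^ ((m : ℝ) / 2) / (2 ^ (m - 1) * Real.Gamma (m / 2)))

lemma Sval_ne_top (m : ℕ) : Sval m ≠ ⊤ := ENNReal.ofReal_ne_top

lemma const_eval (m : ℕ) (hm : 1 ≤ m) :
    (m : ℝ≥0∞) * ENNReal.ofReal (Real.sqrt Real.pi ^ m / Real.Gamma (m / 2 + 1)) =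
      2 ^ m * Sval m := by
  have hm0 : (0:ℝ) < (m:ℝ) / 2 := by
    have : (1:ℝ) ≤ m := by exact_mod_cast hm
    linarith
  have hΓ : 0 < Real.Gamma ((m:ℝ) / 2) := Real.Gamma_pos_of_pos hm0
  have hsq : Real.sqrt Real.pi ^ m = Real.pi ^ ((m:ℝ) / 2) := by
    rw [Real.sqrt_eq_rpow, ← Real.rpow_natCast (Real.pi ^ ((1:ℝ)/2)) m,
      ← Real.rpow_mul Real.pi_pos.le, one_div, inv_mul_eq_div]
  have key : (m : ℝ) * (Real.sqrt Real.pi ^ m / Real.Gamma ((m:ℝ) / 2 + 1)) =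
      2 ^ m * (Real.pi ^ ((m : ℝ) / 2) / (2 ^ (m - 1) * Real.Gamma ((m:ℝ) / 2))) := by
    rw [Real.Gamma_add_one hm0.ne', hsq]
    have h2 : (2:ℝ) ^ m = 2 ^ (m-1) * 2 := by rw [← pow_succ, Nat.sub_add_cancel hm]
    have hm' : (m:ℝ) ≠ 0 := by positivity
    rw [h2]
    field_simp
  rw [Sval, ← ENNReal.ofReal_natCast, ← ENNReal.ofReal_mul (Nat.cast_nonneg m), key,
    ENNReal.ofReal_mul (by positivity), ENNReal.ofReal_pow (by norm_num : (0:ℝ) ≤ 2),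
    ENNReal.ofReal_ofNat]

lemma lintegral_norm_eucl {ι : Type*} [Fintype ι] [Nonempty ι]
    (g : ℝ → ℝ≥0∞) (hg : Measurable g) :
    ∫⁻ x : EuclideanSpace ℝ ι, g ‖x‖ =
      2 ^ Fintype.card ι * Sval (Fintype.card ι) *
        ∫⁻ r in Ioi (0 : ℝ), ENNReal.ofReal (r ^ (Fintype.card ι - 1)) * g r := by
  rw [lintegral_fun_norm_addHaar' volume g hg, finrank_euclideanSpace,
    EuclideanSpace.volume_ball, ENNReal.ofReal_one, one_pow, one_mul,
    const_eval _ Fintype.card_pos]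

section Orth
variable {ι : Type*} [Fintype ι] [DecidableEq ι]

def Orth (s : Finset ι) : Set (ι → ℝ) := univ.pi fun i => if i ∈ s then Iio 0 else Ioi 0

lemma measurableSet_Orth (s : Finset ι) : MeasurableSet (Orth s) :=
  MeasurableSet.univ_pi fun i => by
    split <;> [exact measurableSet_Iio; exact measurableSet_Ioi]

lemma mem_Orth {s : Finset ι} {x : ι → ℝ} :
    x ∈ Orth s ↔ ∀ i, if i ∈ s then x i < 0 else 0 < x i := by
  simp only [Orth, Set.mem_pi, Set.mem_univ, forall_true_left]
  refine forall_congr' fun i => ?_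
  split <;> simp [Set.mem_Iio, Set.mem_Ioi]

lemma Orth_disjoint {s t : Finset ι} (hst : s ≠ t) : Disjoint (Orth s) (Orth t) := by
  rw [Set.disjoint_left]
  intro x hxs hxt
  have : ∃ i, ¬(i ∈ s ↔ i ∈ t) := by
    by_contra h
    push_neg at h
    exact hst (Finset.ext fun i => h i)
  obtain ⟨i, hi⟩ := this
  rw [mem_Orth] at hxs hxt
  have h1 := hxs i
  have h2 := hxt i
  by_cases hs : i ∈ s <;> by_cases ht : i ∈ t <;>
    simp [hs, ht] at h1 h2 hi <;> linarith

lemma lintegral_orth_decomp (f : (ι → ℝ) → ℝ≥0∞) :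
    ∫⁻ x, f x = ∑ s : Finset ι, ∫⁻ x in Orth s, f x := by
  classical
  have hcompl : volume ((⋃ s : Finset ι, Orth s)ᶜ) = 0 := by
    have hsub : (⋃ s : Finset ι, Orth s)ᶜ ⊆ ⋃ i : ι, {x : ι → ℝ | x i = 0} := by
      intro x hx
      by_contra hmem
      simp only [Set.mem_iUnion, Set.mem_setOf_eq, not_exists] at hmem
      apply hx
      refine Set.mem_iUnion.2 ⟨Finset.univ.filter (fun i => x i < 0), ?_⟩
      rw [mem_Orth]
      intro i
      rcases lt_trichotomy (x i) 0 with h | h | h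
      · simp [Finset.mem_filter, h]
      · exact absurd h (hmem i)
      · simp [Finset.mem_filter, not_lt.2 h.le, h]
    refine measure_mono_null hsub (measure_iUnion_null fun i => ?_)
    rw [volume_pi]
    exact Measure.pi_hyperplane _ i 0
  have hres : (volume : Measure (ι → ℝ)).restrict (⋃ s : Finset ι, Orth s) = volume :=
    Measure.restrict_eq_self_of_ae_mem (by rw [ae_iff]; exact hcompl)
  have this1 : (⋃ s : Finset ι, Orth s) = ⋃ s ∈ (Finset.univ : Finset (Finset ι)), Orth s := by
    simp
  conv_lhs => rw [← hres, this1]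
  rw [lintegral_biUnion_finset (fun s _ t _ hst => Orth_disjoint hst)
    (fun s _ => measurableSet_Orth s) f]

def flipMap (s : Finset ι) : (ι → ℝ) → (ι → ℝ) := fun x i => if i ∈ s then -x i else x i

lemma flipMap_involutive (s : Finset ι) : Function.Involutive (flipMap s) := by
  intro x
  funext i
  simp only [flipMap]
  split <;> simp

lemma flipMap_measurePreserving (s : Finset ι) :
    MeasurePreserving (flipMap s) (volume : Measure (ι → ℝ)) volume := by
  have h := measurePreserving_pi (fun _ : ι => (volume : Measure ℝ))
    (fun _ => volume) (f := fun i (y : ℝ) => if i ∈ s then -y else y) (fun i => ?_)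
  · exact h
  · by_cases hi : i ∈ s
    · simp only [hi, if_true]
      exact Measure.measurePreserving_neg _
    · simp only [hi, if_false]
      exact MeasurePreserving.id _

def flipEquiv (s : Finset ι) : (ι → ℝ) ≃ᵐ (ι → ℝ) where
  toEquiv := (flipMap_involutive s).toPerm
  measurable_toFun := (flipMap_measurePreserving s).measurable
  measurable_invFun := (flipMap_measurePreserving s).measurable

lemma flipMap_preimage_Orth (s : Finset ι) : flipMap s ⁻¹' Orth s = Orth (∅ : Finset ι) := by
  ext x
  simp only [Set.mem_preimage, mem_Orth, flipMap, Finset.notMem_empty, if_false]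
  refine forall_congr' fun i => ?_
  by_cases h : i ∈ s <;> simp [h]

lemma lintegral_Orth_eq_flip (s : Finset ι) (f : (ι → ℝ) → ℝ≥0∞) (hf : Measurable f) :
    ∫⁻ x in Orth s, f x = ∫⁻ x in Orth (∅ : Finset ι), f (flipMap s x) := by
  rw [← flipMap_preimage_Orth s]
  exact ((flipMap_measurePreserving s).setLIntegral_comp_preimage_emb
    (flipEquiv s).measurableEmbedding f _).symm

end Orth

lemma measurable_sumsq {ι : Type*} [Fintype ι] :
    Measurable fun x : ι → ℝ => Real.sqrt (∑ i, x i ^ 2) :=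
  Real.continuous_sqrt.measurable.comp
    (Finset.measurable_sum _ fun i _ => (measurable_pi_apply i).pow_const 2)

lemma posOrth_polar {ι : Type*} [Fintype ι] [Nonempty ι] [DecidableEq ι]
    (g : ℝ → ℝ≥0∞) (hg : Measurable g) :
    ∫⁻ x : ι → ℝ in Orth (∅ : Finset ι), g (Real.sqrt (∑ i, x i ^ 2)) =
      Sval (Fintype.card ι) *
        ∫⁻ r in Ioi (0 : ℝ), ENNReal.ofReal (r ^ (Fintype.card ι - 1)) * g r := by
  set f : (ι → ℝ) → ℝ≥0∞ := fun x => g (Real.sqrt (∑ i, x i ^ 2)) with hf_def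
  have hf : Measurable f := hg.comp measurable_sumsq
  -- full-space integral via Euclidean polar coordinates
  have hfull : ∫⁻ x : ι → ℝ, f x =
      2 ^ Fintype.card ι * Sval (Fintype.card ι) *
        ∫⁻ r in Ioi (0 : ℝ), ENNReal.ofReal (r ^ (Fintype.card ι - 1)) * g r := by
    have hmp := EuclideanSpace.volume_preserving_symm_measurableEquiv_toLp ι
    rw [← hmp.lintegral_comp hf]
    rw [← lintegral_norm_eucl g hg]
    refine lintegral_congr fun y => ?_
    simp only [hf_def]
    congr 1
    rw [EuclideanSpace.norm_eq]
    congr 1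
    refine Finset.sum_congr rfl fun i _ => ?_
    rw [Real.norm_eq_abs, sq_abs]
    rfl
  -- full-space integral as a sum over orthants
  have hsum : ∫⁻ x : ι → ℝ, f x =
      2 ^ Fintype.card ι * ∫⁻ x : ι → ℝ in Orth (∅ : Finset ι), f x := by
    rw [lintegral_orth_decomp f]
    have heach : ∀ s : Finset ι, ∫⁻ x in Orth s, f x =
        ∫⁻ x : ι → ℝ in Orth (∅ : Finset ι), f x := by
      intro s
      rw [lintegral_Orth_eq_flip s f hf]
      refine lintegral_congr fun x => ?_
      simp only [hf_def]
      congr 2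
      refine Finset.sum_congr rfl fun i _ => ?_
      simp only [flipMap]
      split <;> [rw [neg_sq]; rfl]
    rw [Finset.sum_congr rfl fun s _ => heach s, Finset.sum_const, Finset.card_univ,
      Fintype.card_finset, nsmul_eq_mul, Nat.cast_pow, Nat.cast_ofNat]
  have h2 : (2 : ℝ≥0∞) ^ Fintype.card ι ≠ 0 := by positivity
  have h2' : (2 : ℝ≥0∞) ^ Fintype.card ι ≠ ⊤ := by
    exact ENNReal.pow_ne_top ENNReal.ofNat_ne_top
  have := hsum.symm.trans hfull
  rw [mul_assoc] at this
  exact (ENNReal.mul_right_inj h2 h2').mp this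

lemma posOrth_polar2 {ι₁ ι₂ : Type*} [Fintype ι₁] [Nonempty ι₁] [DecidableEq ι₁]
    [Fintype ι₂] [Nonempty ι₂] [DecidableEq ι₂]
    (F : ℝ → ℝ → ℝ≥0∞) (hF : Measurable (Function.uncurry F)) :
    (∫⁻ y : ι₁ → ℝ in Orth (∅ : Finset ι₁),
      ∫⁻ z : ι₂ → ℝ in Orth (∅ : Finset ι₂),
        F (Real.sqrt (∑ i, y i ^ 2)) (Real.sqrt (∑ i, z i ^ 2))) =
      Sval (Fintype.card ι₁) * Sval (Fintype.card ι₂) *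
        ∫⁻ rp in Ioi (0 : ℝ), ∫⁻ rm in Ioi (0 : ℝ),
          ENNReal.ofReal (rp ^ (Fintype.card ι₁ - 1) * rm ^ (Fintype.card ι₂ - 1)) * F rp rm := by
  set c₁ := Fintype.card ι₁
  set c₂ := Fintype.card ι₂
  set G : ℝ → ℝ≥0∞ := fun ρ => ∫⁻ rm in Ioi (0 : ℝ),
    ENNReal.ofReal (rm ^ (c₂ - 1)) * F ρ rm with hG_def
  have hGmeas : Measurable G := by
    have : Measurable fun p : ℝ × ℝ => ENNReal.ofReal (p.2 ^ (c₂ - 1)) * F p.1 p.2 :=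
      ((measurable_snd.pow_const _).ennreal_ofReal).mul hF
    exact this.lintegral_prod_right'
  have hinner : ∀ a : ℝ, (∫⁻ z : ι₂ → ℝ in Orth (∅ : Finset ι₂),
      F a (Real.sqrt (∑ i, z i ^ 2))) = Sval c₂ * G a := by
    intro a
    exact posOrth_polar (fun t => F a t) (hF.comp measurable_prodMk_left)
  calc
    (∫⁻ y : ι₁ → ℝ in Orth (∅ : Finset ι₁),
        ∫⁻ z : ι₂ → ℝ in Orth (∅ : Finset ι₂),
          F (Real.sqrt (∑ i, y i ^ 2)) (Real.sqrt (∑ i, z i ^ 2))) =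
        ∫⁻ y : ι₁ → ℝ in Orth (∅ : Finset ι₁),
          Sval c₂ * G (Real.sqrt (∑ i, y i ^ 2)) :=
      lintegral_congr fun y => hinner _
    _ = Sval c₂ * ∫⁻ y : ι₁ → ℝ in Orth (∅ : Finset ι₁), G (Real.sqrt (∑ i, y i ^ 2)) :=
      lintegral_const_mul' _ _ (Sval_ne_top _)
    _ = Sval c₂ * (Sval c₁ * ∫⁻ rp in Ioi (0 : ℝ),
          ENNReal.ofReal (rp ^ (c₁ - 1)) * G rp) := by
      rw [posOrth_polar G hGmeas]
    _ = Sval c₁ * Sval c₂ * ∫⁻ rp in Ioi (0 : ℝ),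
          ENNReal.ofReal (rp ^ (c₁ - 1)) * G rp := by ring
    _ = _ := by
      congr 1
      refine setLIntegral_congr_fun measurableSet_Ioi (
        fun rp hrp => ?_)
      rw [hG_def]
      rw [← lintegral_const_mul' _ _ ENNReal.ofReal_ne_top]
      refine lintegral_congr fun rm => ?_
      rw [← mul_assoc, ← ENNReal.ofReal_mul (pow_nonneg (le_of_lt hrp) _)]

lemma mem_posOrth {ι : Type*} [Fintype ι] [DecidableEq ι] {x : ι → ℝ} :
    x ∈ Orth (∅ : Finset ι) ↔ ∀ i, 0 < x i := by
  simp [mem_Orth]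

lemma orth_eval_mid {N : ℕ} (s : Finset (Fin N)) (hs1 : s.Nonempty) (hs2 : sᶜ.Nonempty)
    (F : ℝ → ℝ → ℝ≥0∞) (hF : Measurable (Function.uncurry F)) :
    (∫⁻ x : Fin N → ℝ in Orth (∅ : Finset (Fin N)),
      F (Real.sqrt (∑ i ∈ sᶜ, x i ^ 2)) (Real.sqrt (∑ i ∈ s, x i ^ 2))) =
    Sval (N - s.card) * Sval s.card *
      ∫⁻ rp in Ioi (0:ℝ), ∫⁻ rm in Ioi (0:ℝ),
        ENNReal.ofReal (rp ^ (N - s.card - 1) * rm ^ (s.card - 1)) * F rp rm := by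
  classical
  set p : Fin N → Prop := fun i => i ∉ s with hp_def
  haveI : Nonempty {i // p i} := by
    obtain ⟨j, hj⟩ := hs2
    exact ⟨⟨j, Finset.mem_compl.mp hj⟩⟩
  haveI : Nonempty {i // ¬ p i} := by
    obtain ⟨j, hj⟩ := hs1
    exact ⟨⟨j, not_not.mpr hj⟩⟩
  set e := MeasurableEquiv.piEquivPiSubtypeProd (fun _ : Fin N => ℝ) p with he_def
  have hmp := volume_preserving_piEquivPiSubtypeProd (fun _ : Fin N => ℝ) p
  set H : (({i // p i} → ℝ) × ({i // ¬ p i} → ℝ)) → ℝ≥0∞ := fun q =>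
    F (Real.sqrt (∑ j, q.1 j ^ 2)) (Real.sqrt (∑ j, q.2 j ^ 2)) with hH_def
  have hH : Measurable H :=
    hF.comp ((measurable_sumsq.comp measurable_fst).prodMk
      (measurable_sumsq.comp measurable_snd))
  have hset : Orth (∅ : Finset (Fin N)) =
      e ⁻¹' ((Orth (∅ : Finset {i // p i})) ×ˢ (Orth (∅ : Finset {i // ¬ p i}))) := by
    ext x
    simp only [Set.mem_preimage, Set.mem_prod, mem_posOrth, he_def,
      MeasurableEquiv.piEquivPiSubtypeProd, MeasurableEquiv.coe_mk,
      Equiv.piEquivPiSubtypeProd_apply]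
    constructor
    · exact fun h => ⟨fun i => h i, fun i => h i⟩
    · rintro ⟨h1, h2⟩ i
      by_cases hi : p i
      · exact h1 ⟨i, hi⟩
      · exact h2 ⟨i, hi⟩
  have hcomp : ∀ x : Fin N → ℝ,
      F (Real.sqrt (∑ i ∈ sᶜ, x i ^ 2)) (Real.sqrt (∑ i ∈ s, x i ^ 2)) = H (e x) := by
    intro x
    simp only [hH_def, he_def, MeasurableEquiv.piEquivPiSubtypeProd,
      MeasurableEquiv.coe_mk, Equiv.piEquivPiSubtypeProd_apply]
    congr 2
    · exact Finset.sum_subtype sᶜ (fun i => Finset.mem_compl) (fun i => x i ^ 2)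
    · exact Finset.sum_subtype s (fun i => not_not.symm) (fun i => x i ^ 2)
  have hcard1 : Fintype.card {i // p i} = N - s.card := by
    have h1 : Fintype.card {i // p i} = Fintype.card {i : Fin N // ¬ i ∈ s} :=
      Fintype.card_congr (Equiv.subtypeEquivRight fun i => Iff.rfl)
    rw [h1, Fintype.card_subtype_compl, Fintype.card_coe, Fintype.card_fin]
  have hcard2 : Fintype.card {i // ¬ p i} = s.card := by
    rw [Fintype.card_congr (Equiv.subtypeEquivRight fun i => not_not), Fintype.card_coe]
  calc
    (∫⁻ x : Fin N → ℝ in Orth (∅ : Finset (Fin N)),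
        F (Real.sqrt (∑ i ∈ sᶜ, x i ^ 2)) (Real.sqrt (∑ i ∈ s, x i ^ 2))) =
      ∫⁻ x : Fin N → ℝ in e ⁻¹'
          ((Orth (∅ : Finset {i // p i})) ×ˢ (Orth (∅ : Finset {i // ¬ p i}))), H (e x) := by
        rw [← hset]; exact lintegral_congr fun x => by rw [hcomp x]
    _ = ∫⁻ q in (Orth (∅ : Finset {i // p i})) ×ˢ (Orth (∅ : Finset {i // ¬ p i})), H q := by
        exact hmp.setLIntegral_comp_preimage_emb e.measurableEmbedding H _
    _ = ∫⁻ y in Orth (∅ : Finset {i // p i}), ∫⁻ z in Orth (∅ : Finset {i // ¬ p i}),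
          H (y, z) := by
        rw [Measure.volume_eq_prod, ← Measure.prod_restrict, lintegral_prod H hH.aemeasurable]
    _ = Sval (Fintype.card {i // p i}) * Sval (Fintype.card {i // ¬ p i}) *
        ∫⁻ rp in Ioi (0:ℝ), ∫⁻ rm in Ioi (0:ℝ),
          ENNReal.ofReal (rp ^ (Fintype.card {i // p i} - 1) *
            rm ^ (Fintype.card {i // ¬ p i} - 1)) * F rp rm :=
      posOrth_polar2 F hF
    _ = _ := by rw [hcard1, hcard2]

lemma orth_eval_stepA {N : ℕ} (s : Finset (Fin N))
    (F : ℝ → ℝ → ℝ≥0∞) (hF : Measurable (Function.uncurry F)) :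
    (∫⁻ x : Fin N → ℝ in Orth s,
        F (Real.sqrt (∑ i, max (x i) 0 ^ 2)) (Real.sqrt (∑ i, min (x i) 0 ^ 2))) =
      ∫⁻ x : Fin N → ℝ in Orth (∅ : Finset (Fin N)),
        F (Real.sqrt (∑ i ∈ sᶜ, x i ^ 2)) (Real.sqrt (∑ i ∈ s, x i ^ 2)) := by
  classical
  have hfmeas : Measurable fun x : Fin N → ℝ =>
      F (Real.sqrt (∑ i, max (x i) 0 ^ 2)) (Real.sqrt (∑ i, min (x i) 0 ^ 2)) := by
    have h1 : Measurable fun x : Fin N → ℝ => Real.sqrt (∑ i, max (x i) 0 ^ 2) :=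
      Real.continuous_sqrt.measurable.comp (Finset.measurable_sum _ fun i _ =>
        ((measurable_pi_apply i).max measurable_const).pow_const 2)
    have h2 : Measurable fun x : Fin N → ℝ => Real.sqrt (∑ i, min (x i) 0 ^ 2) :=
      Real.continuous_sqrt.measurable.comp (Finset.measurable_sum _ fun i _ =>
        ((measurable_pi_apply i).min measurable_const).pow_const 2)
    exact hF.comp (h1.prodMk h2)
  rw [lintegral_Orth_eq_flip s _ hfmeas]
  refine setLIntegral_congr_fun (measurableSet_Orth _) (
    fun x hx => ?_)
  rw [mem_posOrth] at hx
  have hmaxi : ∀ i, max (flipMap s x i) 0 ^ 2 = if i ∈ sᶜ then x i ^ 2 else 0 := by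
    intro i
    simp only [flipMap, Finset.mem_compl]
    by_cases hi : i ∈ s
    · simp [hi, max_eq_right (neg_nonpos.mpr (hx i).le)]
    · simp [hi, max_eq_left (hx i).le]
  have hmini : ∀ i, min (flipMap s x i) 0 ^ 2 = if i ∈ s then x i ^ 2 else 0 := by
    intro i
    simp only [flipMap]
    by_cases hi : i ∈ s
    · simp [hi, min_eq_left (neg_nonpos.mpr (hx i).le), neg_sq]
    · simp [hi, min_eq_right (hx i).le]
  have hmax : (∑ i, max (flipMap s x i) 0 ^ 2) = ∑ i ∈ sᶜ, x i ^ 2 := by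
    rw [Finset.sum_congr rfl (fun i _ => hmaxi i), Finset.sum_ite_mem, Finset.univ_inter]
  have hmin : (∑ i, min (flipMap s x i) 0 ^ 2) = ∑ i ∈ s, x i ^ 2 := by
    rw [Finset.sum_congr rfl (fun i _ => hmini i), Finset.sum_ite_mem, Finset.univ_inter]
  rw [hmax, hmin]


/-- Orthant decomposition of an integral over `ℝ^N` of a function of the
Euclidean norms `‖x₊‖`, `‖x₋‖` of the positive and negative parts of `x`: with
`S_m = π^{m/2}/(2^{m−1} Γ(m/2))` the area of the positive-orthant unit sphere,
`∫ F(‖x₊‖,‖x₋‖) dx = S_N ∫ r^{N−1} F(r,0) dr + S_N ∫ r^{N−1} F(0,r) dr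
  + Σ_{k=1}^{N−1} (N choose k) S_{N−k} S_k ∫∫ r₊^{N−k−1} r₋^{k−1} F(r₊,r₋) dr₋ dr₊`. -/
theorem orthant_decomposition_integral
    (N : ℕ) (hN : 2 ≤ N)
    (S : ℕ → ℝ≥0∞)
    (hS : ∀ m : ℕ, 1 ≤ m →
      S m = ENNReal.ofReal (Real.pi ^ ((m : ℝ) / 2) / (2 ^ (m - 1) * Real.Gamma (m / 2))))
    (F : ℝ → ℝ → ℝ≥0∞) (hF : Measurable (Function.uncurry F)) :
    ∫⁻ x : Fin N → ℝ,
        F (Real.sqrt (∑ i, max (x i) 0 ^ 2)) (Real.sqrt (∑ i, min (x i) 0 ^ 2)) =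
      S N * (∫⁻ r in Set.Ioi (0 : ℝ), ENNReal.ofReal (r ^ (N - 1)) * F r 0) +
        S N * (∫⁻ r in Set.Ioi (0 : ℝ), ENNReal.ofReal (r ^ (N - 1)) * F 0 r) +
        ∑ k ∈ Finset.Ioo 0 N, (N.choose k : ℝ≥0∞) * S (N - k) * S k *
          ∫⁻ rp in Set.Ioi (0 : ℝ), ∫⁻ rm in Set.Ioi (0 : ℝ),
            ENNReal.ofReal (rp ^ (N - k - 1) * rm ^ (k - 1)) * F rp rm := by
  classical
  haveI : Nonempty (Fin N) := ⟨⟨0, by omega⟩⟩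
  have hSS : ∀ m : ℕ, 1 ≤ m → S m = Sval m := fun m hm => (hS m hm).trans rfl
  set I₁ : ℝ≥0∞ := ∫⁻ r in Set.Ioi (0 : ℝ), ENNReal.ofReal (r ^ (N - 1)) * F r 0 with hI₁
  set I₂ : ℝ≥0∞ := ∫⁻ r in Set.Ioi (0 : ℝ), ENNReal.ofReal (r ^ (N - 1)) * F 0 r with hI₂
  set J : ℕ → ℝ≥0∞ := fun k => ∫⁻ rp in Set.Ioi (0 : ℝ), ∫⁻ rm in Set.Ioi (0 : ℝ),
    ENNReal.ofReal (rp ^ (N - k - 1) * rm ^ (k - 1)) * F rp rm with hJ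
  set T : ℕ → ℝ≥0∞ := fun k =>
    if k = 0 then Sval N * I₁
    else if k = N then Sval N * I₂
    else Sval (N - k) * Sval k * J k with hT
  have heach : ∀ s : Finset (Fin N),
      (∫⁻ x : Fin N → ℝ in Orth s,
        F (Real.sqrt (∑ i, max (x i) 0 ^ 2)) (Real.sqrt (∑ i, min (x i) 0 ^ 2))) = T s.card := by
    intro s
    rw [orth_eval_stepA s F hF]
    by_cases h0 : s = ∅
    · subst h0
      simp only [hT, Finset.card_empty, if_pos rfl]
      rw [Finset.compl_empty]
      simp only [Finset.sum_empty, Real.sqrt_zero]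
      have := posOrth_polar (ι := Fin N) (fun r => F r 0)
        (hF.comp (measurable_id.prodMk measurable_const))
      rw [Fintype.card_fin] at this
      exact this
    · by_cases h1 : s = Finset.univ
      · subst h1
        have hc : (Finset.univ : Finset (Fin N)).card = N := by
          rw [Finset.card_univ, Fintype.card_fin]
        simp only [hT, hc, if_neg (by omega : ¬ N = 0), if_pos rfl]
        rw [Finset.compl_univ]
        simp only [Finset.sum_empty, Real.sqrt_zero]
        have := posOrth_polar (ι := Fin N) (fun r => F 0 r)
          (hF.comp measurable_prodMk_left)
        rw [Fintype.card_fin] at this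
        exact this
      · have hs1 : s.Nonempty := Finset.nonempty_iff_ne_empty.mpr h0
        have hs2 : sᶜ.Nonempty := by
          rw [← Finset.card_pos, Finset.card_compl, Fintype.card_fin]
          have := Finset.card_lt_iff_ne_univ s |>.mpr h1
          rw [Fintype.card_fin] at this
          omega
        have hk0 : s.card ≠ 0 := by simpa [Finset.card_eq_zero] using h0
        have hkN : s.card ≠ N := fun h =>
          h1 (s.card_eq_iff_eq_univ.mp (by rw [Fintype.card_fin]; exact h))
        simp only [hT, if_neg hk0, if_neg hkN]
        exact orth_eval_mid s hs1 hs2 F hF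
  rw [lintegral_orth_decomp (fun x : Fin N → ℝ =>
    F (Real.sqrt (∑ i, max (x i) 0 ^ 2)) (Real.sqrt (∑ i, min (x i) 0 ^ 2)))]
  rw [Finset.sum_congr rfl (fun s _ => heach s)]
  have hpow := Finset.sum_powerset_apply_card T (x := (Finset.univ : Finset (Fin N)))
  rw [Finset.powerset_univ, Finset.card_univ, Fintype.card_fin] at hpow
  rw [hpow]
  have hsplit : Finset.range (N + 1) = insert 0 (insert N (Finset.Ioo 0 N)) := by
    ext m; simp; omega
  rw [hsplit, Finset.sum_insert (by simp; omega), Finset.sum_insert (by simp)]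
  have hT0 : T 0 = Sval N * I₁ := by simp [hT]
  have hTN : T N = Sval N * I₂ := by simp [hT]; intro h; omega
  rw [hT0, hTN, Nat.choose_zero_right, Nat.choose_self, one_smul, one_smul]
  rw [hSS N (by omega)]
  rw [Finset.sum_congr rfl (fun k hk => ?_), ← add_assoc]
  rw [Finset.mem_Ioo] at hk
  rw [hSS k (by omega), hSS (N - k) (by omega)]
  simp only [hT, if_neg (by omega : ¬ k = 0), if_neg (by omega : ¬ k = N)]
  rw [nsmul_eq_mul]
  ring
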